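/- Let A = (a_{ij})_{i,j≥1} be an arbitrary infinite complex matrix, n ≥ 0 and m ≥ 1. Then the binomial(m+n, m) polynomials P^I_A ∈ ℂ[x_0,…,x_n], as I ranges over all m-element subsets of {1,…,m+n}, are linearly independent over ℂ. -/

import Mathlib

/-- The polynomial `P^I_A` (see the paper): determinant of the `m × m` submatrix of
`A - ∑ x_s I_s` formed by the first `m` rows and the columns indexed by `I` (`0`-based). -/
noncomputable def PIA (A : ℕ → ℕ → ℂ) (n m : ℕ) (i : Fin m → Fin (m + n)) :
    MvPolynomial (Fin (n + 1)) ℂ :=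
  Matrix.det (Matrix.of fun r c : Fin m =>
    MvPolynomial.C (A (r : ℕ) ((i c : ℕ))) -
      if h : (r : ℕ) ≤ (i c : ℕ) ∧ (i c : ℕ) ≤ (r : ℕ) + n then
        MvPolynomial.X (⟨(i c : ℕ) - (r : ℕ), by omega⟩ : Fin (n + 1))
      else 0)

namespace PIAProof

open MvPolynomial Finset

variable {n m : ℕ}

/-! ### A strictly concave weight function -/

/-- The strictly concave weight `φ(s) = s(2n-s)`. -/
def phi (n s : ℕ) : ℕ := s * (2 * n - s)

lemma phi_le {s : ℕ} (hs : s ≤ n) : phi n s ≤ n * n := by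
  obtain ⟨t, ht⟩ : ∃ t, n = s + t := ⟨n - s, by omega⟩
  subst ht
  have h : 2 * (s + t) - s = s + 2 * t := by omega
  rw [phi, h]
  nlinarith

lemma phi_exchange {a b c d : ℕ} (ha : a ≤ n) (hba : b < a) (hca : c < a)
    (hsum : a + d = b + c) : phi n a + phi n d < phi n b + phi n c := by
  unfold phi
  zify [show a ≤ 2 * n by omega, show b ≤ 2 * n by omega, show c ≤ 2 * n by omega,
    show d ≤ 2 * n by omega]
  have hs : (a : ℤ) + d = b + c := by exact_mod_cast hsum
  have h1 : (0 : ℤ) < (a : ℤ) - b := by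
    have : (b : ℤ) < a := by exact_mod_cast hba
    omega
  have h2 : (0 : ℤ) < (a : ℤ) - c := by
    have : (c : ℤ) < a := by exact_mod_cast hca
    omega
  nlinarith [mul_pos h1 h2]

/-! ### Facts about strict monotone maps of `Fin` -/

lemma sm_le_aux {k : ℕ} {f : Fin m → Fin k} (hf : StrictMono f) :
    ∀ (v : ℕ) (hv : v < m), v ≤ (f ⟨v, hv⟩ : ℕ)
  | 0, _ => Nat.zero_le _
  | (w+1), hv => by
      have hw : w < m := by omega
      have h1 := sm_le_aux hf w hw
      have h2 : f ⟨w, hw⟩ < f ⟨w+1, hv⟩ := hf (by simp [Fin.lt_def])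
      simp only [Fin.lt_def] at h2
      omega

lemma sm_le {k : ℕ} {f : Fin m → Fin k} (hf : StrictMono f) (c : Fin m) : (c : ℕ) ≤ f c :=
  sm_le_aux hf c.1 c.2

lemma sm_add {k : ℕ} {f : Fin m → Fin k} (hf : StrictMono f) :
    ∀ (l : ℕ) (c c' : Fin m), (c' : ℕ) = (c : ℕ) + l → (f c : ℕ) + l ≤ f c' := by
  intro l
  induction l with
  | zero =>
      intro c c' h
      have : c = c' := Fin.ext (by omega)
      subst this
      simp
  | succ l ih =>
      intro c c' h
      have hc'' : (c : ℕ) + l < m := by have := c'.2; omega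
      set c'' : Fin m := ⟨(c : ℕ) + l, hc''⟩ with hc''def
      have h1 : (f c : ℕ) + l ≤ f c'' := ih c c'' rfl
      have h2 : f c'' < f c' := hf (by rw [Fin.lt_def]; simp [hc''def]; omega)
      rw [Fin.lt_def] at h2
      omega

lemma sm_ub {f : Fin m → Fin (m+n)} (hf : StrictMono f) (c : Fin m) : (f c : ℕ) ≤ c + n := by
  have hc := c.2
  set cl : Fin m := ⟨m - 1, by omega⟩ with hcl
  have h : (f c : ℕ) + (m - 1 - c.1) ≤ f cl :=
    sm_add hf (m - 1 - c.1) c cl (by simp [hcl]; omega)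
  have h3 : (f cl : ℕ) < m + n := (f cl).2
  omega

lemma sm_mono_d {f : Fin m → Fin (m+n)} (hf : StrictMono f) {c c' : Fin m} (hcc : c ≤ c') :
    (f c : ℕ) - c ≤ (f c' : ℕ) - c' := by
  have hcc' : (c : ℕ) ≤ c' := hcc
  have h : (f c : ℕ) + (c'.1 - c.1) ≤ f c' := sm_add hf (c'.1 - c.1) c c' (by omega)
  omega

/-- a strictly monotone permutation of `Fin m` is the identity -/
lemma perm_eq_one_of_strictMono (σ : Equiv.Perm (Fin m)) (h : StrictMono σ) : σ = 1 := by
  have hsymm : StrictMono σ.symm := by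
    intro a b hab
    by_contra hcon
    push_neg at hcon
    have h2 := h.monotone hcon
    simp only [Equiv.apply_symm_apply] at h2
    exact absurd hab (not_lt.mpr h2)
  refine Equiv.ext fun c => Fin.ext (le_antisymm ?_ ?_)
  · have h1 : ((σ c : ℕ)) ≤ σ.symm (σ c) := sm_le hsymm (σ c)
    simpa using h1
  · exact sm_le h c

/-! ### Weights of exponents -/

/-- total weight of an exponent vector -/
def Wt (n : ℕ) (μ : Fin (n+1) →₀ ℕ) : ℕ := ∑ d, μ d * phi n d

/-- total degree of an exponent vector -/
def Dg (n : ℕ) (μ : Fin (n+1) →₀ ℕ) : ℕ := ∑ d, μ d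

lemma Wt_sum (v : Fin m → Fin (n+1)) (s : Finset (Fin m)) :
    Wt n (∑ c ∈ s, Finsupp.single (v c) 1) = ∑ c ∈ s, phi n (v c) := by
  unfold Wt
  simp_rw [Finset.sum_apply', Finset.sum_mul]
  rw [Finset.sum_comm]
  refine Finset.sum_congr rfl fun c _ => ?_
  simp [Finsupp.single_apply, ite_mul]

lemma Dg_sum (v : Fin m → Fin (n+1)) (s : Finset (Fin m)) :
    Dg n (∑ c ∈ s, Finsupp.single (v c) 1) = s.card := by
  unfold Dg
  simp_rw [Finset.sum_apply']
  rw [Finset.sum_comm]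
  simp [Finsupp.single_apply]

lemma Dg_support (μ : Fin (n+1) →₀ ℕ) : ∑ d ∈ μ.support, μ d = Dg n μ :=
  Finset.sum_subset (Finset.subset_univ _)
    (fun x _ hx => Finsupp.notMem_support_iff.mp hx)

/-! ### Monotone tuples are determined by their multiset of values -/

lemma finsupp_eq_multiset (v : Fin m → Fin (n+1)) (s : Finset (Fin m)) :
    (Multiset.map v s.val).toFinsupp = ∑ c ∈ s, Finsupp.single (v c) 1 := by
  induction s using Finset.induction_on with
  | empty => simp
  | @insert a s ha ih =>
      rw [Finset.insert_val_of_notMem ha, Multiset.map_cons, ← Multiset.singleton_add,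
        Multiset.toFinsupp_add, Multiset.toFinsupp_singleton, Finset.sum_insert ha, ih]

lemma mono_tuple_eq (d e : Fin m → Fin (n+1)) (hd : Monotone d) (he : Monotone e)
    (h : ∑ c, Finsupp.single (d c) 1 = ∑ c, Finsupp.single (e c) 1) : d = e := by
  rw [← finsupp_eq_multiset d Finset.univ, ← finsupp_eq_multiset e Finset.univ] at h
  have h2 : Multiset.map d Finset.univ.val = Multiset.map e Finset.univ.val :=
    Multiset.toFinsupp.injective h
  rw [Fin.univ_val_map, Fin.univ_val_map] at h2
  have h3 : List.Perm (List.ofFn d) (List.ofFn e) := Multiset.coe_eq_coe.mp h2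
  exact List.ofFn_injective (List.Perm.eq_of_sortedLE
    (List.sortedLE_ofFn_iff.mpr hd) (List.sortedLE_ofFn_iff.mpr he) h3)

/-! ### The leading exponent attached to a strictly monotone tuple -/

/-- `d_c = i_c - c`, as an element of `Fin (n+1)`. -/
def dfin (j : Fin m → Fin (m+n)) (hj : StrictMono j) (c : Fin m) : Fin (n+1) :=
  ⟨(j c : ℕ) - c, by have := sm_ub hj c; omega⟩

/-- the leading exponent vector -/
noncomputable def mu (j : Fin m → Fin (m+n)) (hj : StrictMono j) : Fin (n+1) →₀ ℕ :=
  ∑ c, Finsupp.single (dfin j hj c) 1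

/-- the weight of a strictly monotone tuple -/
def wt (n : ℕ) {m : ℕ} (j : Fin m → Fin (m+n)) : ℕ := ∑ c, phi n ((j c : ℕ) - c)

lemma Wt_mu {j : Fin m → Fin (m+n)} (hj : StrictMono j) : Wt n (mu j hj) = wt n j :=
  Wt_sum _ _

lemma Dg_mu {j : Fin m → Fin (m+n)} (hj : StrictMono j) : Dg n (mu j hj) = m := by
  rw [mu, Dg_sum]; simp

lemma dfin_mono {j : Fin m → Fin (m+n)} (hj : StrictMono j) : Monotone (dfin j hj) :=
  fun c c' h => by
    simp only [dfin, Fin.mk_le_mk]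
    exact sm_mono_d hj h

lemma mu_inj {i j : Fin m → Fin (m+n)} (hi : StrictMono i) (hj : StrictMono j)
    (h : mu i hi = mu j hj) : i = j := by
  have hde := mono_tuple_eq _ _ (dfin_mono hi) (dfin_mono hj) h
  funext c
  have h1 := congrFun hde c
  have h2 : (i c : ℕ) - c = (j c : ℕ) - c := congrArg Fin.val h1
  have h3 := sm_le hi c
  have h4 := sm_le hj c
  exact Fin.ext (by omega)

/-! ### The rearrangement inequality -/

lemma wt_bound {j : Fin m → Fin (m+n)} (σ : Equiv.Perm (Fin m))
    (hadm : ∀ c, (σ c : ℕ) ≤ (j c : ℕ) ∧ (j c : ℕ) ≤ (σ c : ℕ) + n) :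
    (∑ c, phi n ((j c : ℕ) - σ c)) ≤ m * (n * n) := by
  calc (∑ c, phi n ((j c : ℕ) - σ c)) ≤ ∑ _c : Fin m, n * n :=
        Finset.sum_le_sum fun c _ => phi_le (by have := (hadm c).1; have := (hadm c).2; omega)
    _ = m * (n * n) := by simp [Finset.sum_const, mul_comm]

lemma rearr {j : Fin m → Fin (m+n)} (hj : StrictMono j) (σ : Equiv.Perm (Fin m))
    (hadm : ∀ c, (σ c : ℕ) ≤ (j c : ℕ) ∧ (j c : ℕ) ≤ (σ c : ℕ) + n) :
    (∑ c, phi n ((j c : ℕ) - σ c)) ≤ wt n j ∧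
      ((∑ c, phi n ((j c : ℕ) - σ c)) = wt n j → σ = 1) := by
  have main : ∀ (K : ℕ) (σ : Equiv.Perm (Fin m)),
      (∀ c, (σ c : ℕ) ≤ (j c : ℕ) ∧ (j c : ℕ) ≤ (σ c : ℕ) + n) →
      m * (n * n) + 1 - (∑ c, phi n ((j c : ℕ) - σ c)) ≤ K →
      (∑ c, phi n ((j c : ℕ) - σ c)) ≤ wt n j ∧
        ((∑ c, phi n ((j c : ℕ) - σ c)) = wt n j → σ = 1) := by
    intro K
    induction K with
    | zero =>
        intro σ hadm hK
        have := wt_bound σ hadm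
        omega
    | succ K ih =>
        intro σ hadm hK
        by_cases h1 : σ = 1
        · subst h1
          constructor
          · simp [wt]
          · intro _; rfl
        · -- find an inversion
          have hinv : ∃ p : Fin m × Fin m, p.1 < p.2 ∧ σ p.2 < σ p.1 := by
            by_contra hno
            push_neg at hno
            apply h1
            apply perm_eq_one_of_strictMono
            intro a b hab
            exact lt_of_le_of_ne (hno (a, b) hab) (fun he => (σ.injective he ▸ hab).ne rfl)
          obtain ⟨⟨c, c'⟩, hlt, hσ⟩ := hinv
          have hcc : c ≠ c' := ne_of_lt hlt
          set σ' : Equiv.Perm (Fin m) := σ * Equiv.swap c c' with hσ'def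
          have hs1 : σ' c = σ c' := by simp [hσ'def, Equiv.swap_apply_left]
          have hs2 : σ' c' = σ c := by simp [hσ'def, Equiv.swap_apply_right]
          have hs3 : ∀ e, e ≠ c → e ≠ c' → σ' e = σ e := fun e he1 he2 => by
            simp [hσ'def, Equiv.swap_apply_of_ne_of_ne he1 he2]
          have hjlt : (j c : ℕ) < j c' := hj hlt
          have hσlt : (σ c' : ℕ) < σ c := hσ
          have hc1 := hadm c
          have hc2 := hadm c'
          have hadm' : ∀ e, (σ' e : ℕ) ≤ (j e : ℕ) ∧ (j e : ℕ) ≤ (σ' e : ℕ) + n := by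
            intro e
            rcases eq_or_ne e c with rfl | he1
            · rw [hs1]; omega
            · rcases eq_or_ne e c' with rfl | he2
              · rw [hs2]; omega
              · rw [hs3 e he1 he2]; exact hadm e
          -- weight strictly increases
          have hexch : phi n ((j c' : ℕ) - σ c') + phi n ((j c : ℕ) - σ c) <
              phi n ((j c : ℕ) - σ c') + phi n ((j c' : ℕ) - σ c) := by
            apply phi_exchange
            · omega
            · omega
            · omega
            · omega
          have hsum1 : (∑ e, phi n ((j e : ℕ) - σ e)) =
              phi n ((j c : ℕ) - σ c) + (phi n ((j c' : ℕ) - σ c') +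
                ∑ e ∈ (Finset.univ.erase c).erase c', phi n ((j e : ℕ) - σ e)) := by
            rw [← Finset.add_sum_erase Finset.univ
                (fun e => phi n ((j e : ℕ) - (σ e : ℕ))) (Finset.mem_univ c),
              ← Finset.add_sum_erase (Finset.univ.erase c)
                (fun e => phi n ((j e : ℕ) - (σ e : ℕ)))
                (Finset.mem_erase.mpr ⟨(Ne.symm hcc), Finset.mem_univ c'⟩)]
          have hsum2 : (∑ e, phi n ((j e : ℕ) - σ' e)) =
              phi n ((j c : ℕ) - σ c') + (phi n ((j c' : ℕ) - σ c) +
                ∑ e ∈ (Finset.univ.erase c).erase c', phi n ((j e : ℕ) - σ e)) := by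
            rw [← Finset.add_sum_erase Finset.univ
                (fun e => phi n ((j e : ℕ) - (σ' e : ℕ))) (Finset.mem_univ c),
              ← Finset.add_sum_erase (Finset.univ.erase c)
                (fun e => phi n ((j e : ℕ) - (σ' e : ℕ)))
                (Finset.mem_erase.mpr ⟨(Ne.symm hcc), Finset.mem_univ c'⟩),
              hs1, hs2]
            congr 2
            refine Finset.sum_congr rfl fun e he => ?_
            rw [hs3 e (Finset.mem_erase.mp (Finset.mem_erase.mp he).2).1
              (Finset.mem_erase.mp he).1]
          have hWlt : (∑ e, phi n ((j e : ℕ) - σ e)) < ∑ e, phi n ((j e : ℕ) - σ' e) := by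
            omega
          have hbound' := wt_bound σ' hadm'
          have hrec := ih σ' hadm' (by omega)
          refine ⟨le_of_lt (lt_of_lt_of_le hWlt hrec.1), fun heq => ?_⟩
          exfalso
          have := hrec.1
          omega
  exact main (m * (n * n) + 1) σ hadm (by omega)

/-! ### Coefficient computations -/

/-- the matrix entry of `PIA` -/
noncomputable def ent (A : ℕ → ℕ → ℂ) (n : ℕ) {m : ℕ} (j : Fin m → Fin (m + n))
    (r c : Fin m) : MvPolynomial (Fin (n + 1)) ℂ :=
  MvPolynomial.C (A (r : ℕ) ((j c : ℕ))) -
    if h : (r : ℕ) ≤ (j c : ℕ) ∧ (j c : ℕ) ≤ (r : ℕ) + n then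
      MvPolynomial.X (⟨(j c : ℕ) - (r : ℕ), by omega⟩ : Fin (n + 1))
    else 0

lemma PIA_eq (A : ℕ → ℕ → ℂ) (j : Fin m → Fin (m+n)) :
    PIA A n m j = Matrix.det (Matrix.of fun r c : Fin m => ent A n j r c) := rfl

lemma prod_X_eq (v : Fin m → Fin (n+1)) (s : Finset (Fin m)) :
    (∏ c ∈ s, (X (v c) : MvPolynomial (Fin (n+1)) ℂ)) =
      monomial (∑ c ∈ s, Finsupp.single (v c) 1) 1 := by
  induction s using Finset.induction_on with
  | empty => simp
  | @insert a s ha ih =>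
      rw [Finset.prod_insert ha, ih, Finset.sum_insert ha,
        show (X (v a) : MvPolynomial (Fin (n+1)) ℂ) = monomial (Finsupp.single (v a) 1) 1 from rfl,
        monomial_mul, one_mul]

lemma coeff_prod_entry (A : ℕ → ℕ → ℂ) (j : Fin m → Fin (m+n)) (σ : Equiv.Perm (Fin m))
    (μ : Fin (n+1) →₀ ℕ) (hdeg : Dg n μ = m) :
    MvPolynomial.coeff μ (∏ c, ent A n j (σ c) c) =
      if h : (∀ c, (σ c : ℕ) ≤ (j c : ℕ) ∧ (j c : ℕ) ≤ (σ c : ℕ) + n) then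
        (if (∑ c, Finsupp.single
            ((⟨(j c : ℕ) - (σ c : ℕ), by have := (h c).2; omega⟩ : Fin (n+1))) (1:ℕ)) = μ
          then ((-1)^m : ℂ) else 0)
      else 0 := by
  classical
  set xp : Fin m → MvPolynomial (Fin (n+1)) ℂ := fun c =>
    -(if h : (σ c : ℕ) ≤ (j c : ℕ) ∧ (j c : ℕ) ≤ (σ c : ℕ) + n then
        (X (⟨(j c : ℕ) - (σ c : ℕ), by omega⟩ : Fin (n+1)) : MvPolynomial (Fin (n+1)) ℂ)
      else 0) with hxp
  have hent : ∀ c ∈ Finset.univ, ent A n j (σ c) c = xp c + C (A (σ c) (j c)) := by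
    intro c _
    rw [ent, hxp, sub_eq_neg_add]
  rw [Finset.prod_congr rfl hent, Finset.prod_add, MvPolynomial.coeff_sum]
  rw [Finset.sum_eq_single_of_mem Finset.univ (Finset.mem_powerset_self _) ?side]
  case side =>
    intro t ht htne
    apply MvPolynomial.coeff_eq_zero_of_totalDegree_lt
    rw [Dg_support, hdeg]
    have hb1 : (∏ c ∈ t, xp c).totalDegree ≤ t.card := by
      refine le_trans (MvPolynomial.totalDegree_finset_prod _ _) ?_
      calc (∑ c ∈ t, (xp c).totalDegree) ≤ ∑ _c ∈ t, 1 := by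
            refine Finset.sum_le_sum fun c _ => ?_
            simp only [hxp]
            split
            · rw [MvPolynomial.totalDegree_neg, MvPolynomial.totalDegree_X]
            · simp
        _ = t.card := by simp
    have hb2 : (∏ c ∈ Finset.univ \ t, (C (A (σ c) (j c)) : MvPolynomial (Fin (n+1)) ℂ)).totalDegree
        = 0 := by
      refine Nat.eq_zero_of_le_zero (le_trans (MvPolynomial.totalDegree_finset_prod _ _) ?_)
      simp [MvPolynomial.totalDegree_C]
    have hcard : t.card < m := by
      have hsub : t ⊆ Finset.univ := Finset.mem_powerset.mp ht
      have := Finset.card_lt_card (HasSubset.Subset.ssubset_of_ne hsub htne)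
      simpa using this
    calc ((∏ c ∈ t, xp c) * ∏ c ∈ Finset.univ \ t,
          (C (A (σ c) (j c)) : MvPolynomial (Fin (n+1)) ℂ)).totalDegree
        ≤ _ + _ := MvPolynomial.totalDegree_mul _ _
      _ ≤ t.card + 0 := add_le_add hb1 (le_of_eq hb2)
      _ < m := by omega
  · rw [Finset.sdiff_self, Finset.prod_empty, mul_one]
    by_cases hadm : ∀ c, (σ c : ℕ) ≤ (j c : ℕ) ∧ (j c : ℕ) ≤ (σ c : ℕ) + n
    · rw [dif_pos hadm]
      have hxpv : ∀ c ∈ Finset.univ, xp c =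
          (-1 : MvPolynomial (Fin (n+1)) ℂ) *
            (X (⟨(j c : ℕ) - (σ c : ℕ), by have := (hadm c).2; omega⟩ : Fin (n+1))) := by
        intro c _
        simp only [hxp]
        rw [dif_pos (hadm c)]
        ring
      rw [Finset.prod_congr rfl hxpv, Finset.prod_mul_distrib, Finset.prod_const, prod_X_eq]
      rw [show ((-1 : MvPolynomial (Fin (n+1)) ℂ)) ^ (Finset.univ : Finset (Fin m)).card
          = C ((-1 : ℂ) ^ m) by rw [map_pow, map_neg, map_one]; simp]
      rw [MvPolynomial.coeff_C_mul, MvPolynomial.coeff_monomial]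
      simp [mul_ite]
    · rw [dif_neg hadm]
      push_neg at hadm
      obtain ⟨c0, hc0⟩ := hadm
      have hnc : ¬((σ c0 : ℕ) ≤ (j c0 : ℕ) ∧ (j c0 : ℕ) ≤ (σ c0 : ℕ) + n) := by
        intro hcon
        exact absurd hcon.2 (not_le.mpr (hc0 hcon.1))
      have hz : xp c0 = 0 := by
        simp only [hxp]
        rw [dif_neg hnc, neg_zero]
      rw [Finset.prod_eq_zero (Finset.mem_univ c0) hz, MvPolynomial.coeff_zero]

lemma coeff_term_zero (A : ℕ → ℕ → ℂ) {i j : Fin m → Fin (m+n)} (hi : StrictMono i)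
    (hj : StrictMono j) (σ : Equiv.Perm (Fin m)) (hW : wt n j ≤ wt n i)
    (hno : ¬(σ = 1 ∧ j = i)) :
    MvPolynomial.coeff (mu i hi) (∏ c, ent A n j (σ c) c) = 0 := by
  rw [coeff_prod_entry A j σ _ (Dg_mu hi)]
  split_ifs with h1 h2
  · exfalso
    have hw1 : Wt n (∑ c, Finsupp.single
        ((⟨(j c : ℕ) - (σ c : ℕ), by have := (h1 c).2; omega⟩ : Fin (n+1))) (1:ℕ)) =
        ∑ c, phi n ((j c : ℕ) - σ c) := Wt_sum _ _
    have hw2 : Wt n (mu i hi) = wt n i := Wt_mu hi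
    have hww : (∑ c, phi n ((j c : ℕ) - σ c)) = wt n i := by rw [← hw1, h2, hw2]
    have hr := rearr hj σ h1
    have hσ1 : σ = 1 := hr.2 (by omega)
    subst hσ1
    have hmm : mu j hj = mu i hi := h2
    exact hno ⟨rfl, mu_inj hj hi hmm⟩
  · rfl
  · rfl

lemma coeff_PIA_zero (A : ℕ → ℕ → ℂ) {i j : Fin m → Fin (m+n)} (hi : StrictMono i)
    (hj : StrictMono j) (hW : wt n j ≤ wt n i) (hne : j ≠ i) :
    MvPolynomial.coeff (mu i hi) (PIA A n m j) = 0 := by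
  rw [PIA_eq, Matrix.det_apply', MvPolynomial.coeff_sum]
  refine Finset.sum_eq_zero fun σ _ => ?_
  have h0 : MvPolynomial.coeff (mu i hi) (∏ c, ent A n j (σ c) c) = 0 :=
    coeff_term_zero A hi hj σ hW (by simp [hne])
  rcases Int.units_eq_one_or (Equiv.Perm.sign σ) with hs | hs <;>
    simp [hs, Matrix.of_apply, MvPolynomial.coeff_neg, h0]

lemma coeff_PIA_diag (A : ℕ → ℕ → ℂ) {i : Fin m → Fin (m+n)} (hi : StrictMono i) :
    MvPolynomial.coeff (mu i hi) (PIA A n m i) = (-1)^m := by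
  rw [PIA_eq, Matrix.det_apply', MvPolynomial.coeff_sum]
  rw [Finset.sum_eq_single_of_mem (1 : Equiv.Perm (Fin m)) (Finset.mem_univ _) ?side]
  case side =>
    intro σ _ hσ1
    have h0 : MvPolynomial.coeff (mu i hi) (∏ c, ent A n i (σ c) c) = 0 :=
      coeff_term_zero A hi hi σ (le_refl _) (by simp [hσ1])
    rcases Int.units_eq_one_or (Equiv.Perm.sign σ) with hs | hs <;>
      simp [hs, Matrix.of_apply, MvPolynomial.coeff_neg, h0]
  · have hadm1 : ∀ c : Fin m, (((1 : Equiv.Perm (Fin m)) c : ℕ)) ≤ (i c : ℕ) ∧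
        (i c : ℕ) ≤ (((1 : Equiv.Perm (Fin m)) c : ℕ)) + n := fun c =>
      ⟨sm_le hi c, sm_ub hi c⟩
    have hc := coeff_prod_entry A i (1 : Equiv.Perm (Fin m)) (mu i hi) (Dg_mu hi)
    rw [dif_pos hadm1] at hc
    rw [if_pos (show (∑ c, Finsupp.single
        ((⟨(i c : ℕ) - (((1 : Equiv.Perm (Fin m)) c : ℕ)), by have := (hadm1 c).2; omega⟩ :
          Fin (n+1))) (1:ℕ)) = mu i hi from rfl)] at hc
    simpa [Matrix.of_apply] using hc

end PIAProof

theorem stmt3 (A : ℕ → ℕ → ℂ) (n m : ℕ) (hm : 1 ≤ m) :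
    LinearIndependent ℂ
      (fun I : {i : Fin m → Fin (m + n) // StrictMono i} => PIA A n m I.1) := by
  classical
  rw [linearIndependent_iff']
  intro s g hsum J hJ
  by_contra hg
  set T := s.filter (fun K => g K ≠ 0) with hT
  have hTne : T.Nonempty := ⟨J, by simp [hT, hJ, hg]⟩
  obtain ⟨I, hIT, hImax⟩ := Finset.exists_max_image T (fun K => PIAProof.wt n K.1) hTne
  have hIs : I ∈ s := (Finset.mem_filter.mp hIT).1
  have hIg : g I ≠ 0 := (Finset.mem_filter.mp hIT).2
  have heq := congrArg (MvPolynomial.coeff (PIAProof.mu I.1 I.2)) hsum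
  rw [MvPolynomial.coeff_sum, MvPolynomial.coeff_zero] at heq
  rw [Finset.sum_eq_single_of_mem I hIs ?side] at heq
  case side =>
    intro K hK hKI
    by_cases hgK : g K = 0
    · simp [hgK]
    · have hKT : K ∈ T := Finset.mem_filter.mpr ⟨hK, hgK⟩
      have hWK : PIAProof.wt n K.1 ≤ PIAProof.wt n I.1 := hImax K hKT
      have hne : K.1 ≠ I.1 := fun h => hKI (Subtype.ext h)
      rw [MvPolynomial.coeff_smul, PIAProof.coeff_PIA_zero A I.2 K.2 hWK hne]
      simp
  rw [MvPolynomial.coeff_smul, PIAProof.coeff_PIA_diag A I.2] at heq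
  apply hIg
  have : g I * (-1 : ℂ)^m = 0 := heq
  rcases mul_eq_zero.mp this with h | h
  · exact h
  · exfalso
    have : ((-1 : ℂ))^m ≠ 0 := by
      apply pow_ne_zero; norm_num
    exact this h
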